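/- In a parity game, exactly one of the two players has a winning strategy from each position (positional determinacy restricted to finite games suffices): for a finite parity game (V, V₀, V₁, E, Ω) with every position having at least one outgoing edge, the winning regions of player 0 and player 1 partition V. -/

import Mathlib

/-- A positional strategy for the player owning the positions in `Vi`:
it must select an outgoing edge at every position of `Vi`. -/
def IsStrategy {V : Type*} (Vi : Set V) (E : V → V → Prop) (σ : V → V) : Prop :=
  ∀ v ∈ Vi, E v (σ v)

/-- A play from `v` consistent with the strategy `σ` of the player owning
`Vi`: an infinite path along edges that follows `σ` on `Vi`. -/
def ConsistentPlay {V : Type*} (Vi : Set V) (E : V → V → Prop) (σ : V → V)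
    (v : V) (π : ℕ → V) : Prop :=
  π 0 = v ∧ ∀ n, E (π n) (π (n + 1)) ∧ (π n ∈ Vi → π (n + 1) = σ (π n))

/-- Player 0 wins a play iff the maximal priority occurring infinitely often
is even. -/
def Wins0 {V : Type*} (Ω : V → ℕ) (π : ℕ → V) : Prop :=
  Even (sSup {p | {n | Ω (π n) = p}.Infinite})



namespace PG

lemma infinite_shift (Q : ℕ → Prop) (k : ℕ) :
    {n | Q (k + n)}.Infinite ↔ {n | Q n}.Infinite := by
  constructor
  · intro h
    have : ((k + ·) '' {n | Q (k + n)}).Infinite :=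
      h.image (Set.injOn_of_injective (fun a b => by omega))
    exact this.mono (by rintro x ⟨n, hn, rfl⟩; exact hn)
  · intro h
    by_contra hfin
    rw [Set.not_infinite] at hfin
    have hsub : {n | Q n} ⊆ Set.Iio k ∪ ((k + ·) '' {n | Q (k + n)}) := by
      intro n hn
      by_cases hk : n < k
      · exact Or.inl hk
      · exact Or.inr ⟨n - k, by simpa [Nat.add_sub_cancel' (le_of_not_gt hk)] using hn,
          show k + (n - k) = n by omega⟩
    exact h (((Set.finite_Iio k).union (hfin.image _)).subset hsub)

lemma wins0_shift {V : Type*} (Ω : V → ℕ) (π : ℕ → V) (k : ℕ) :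
    Wins0 Ω (fun n => π (k + n)) ↔ Wins0 Ω π := by
  unfold Wins0
  have : {p | {n | Ω (π (k + n)) = p}.Infinite} = {p | {n | Ω (π n) = p}.Infinite} := by
    ext p
    exact infinite_shift (fun n => Ω (π n) = p) k
  rw [this]

lemma sSup_priorities {V : Type*} (Ω : V → ℕ) (π : ℕ → V) (p : ℕ)
    (hbd : ∀ n, Ω (π n) ≤ p) (hinf : {n | Ω (π n) = p}.Infinite) :
    sSup {q | {n | Ω (π n) = q}.Infinite} = p := by
  have hbdd : BddAbove {q | {n | Ω (π n) = q}.Infinite} := by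
    refine ⟨p, fun q hq => ?_⟩
    obtain ⟨n, hn⟩ := hq.nonempty
    exact hn ▸ hbd n
  refine le_antisymm (csSup_le ⟨p, hinf⟩ fun q hq => ?_) (le_csSup hbdd hinf)
  obtain ⟨n, hn⟩ := hq.nonempty
  exact hn ▸ hbd n

lemma infinite_of_unbounded (S : Set ℕ) (h : ∀ k, ∃ m, k ≤ m ∧ m ∈ S) : S.Infinite := by
  intro hfin
  obtain ⟨m, hm, hmS⟩ := h ((hfin.toFinset.sup id) + 1)
  have : m ≤ hfin.toFinset.sup id := Finset.le_sup (f := id) (hfin.mem_toFinset.2 hmS)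
  omega

end PG

namespace PG
variable {V : Type*}

def VP (P : Set V) : Bool → Set V
  | false => P
  | true => Pᶜ

lemma mem_VP_not {P : Set V} {b : Bool} {v : V} (h : v ∉ VP P b) : v ∈ VP P (!b) := by
  cases b <;> simpa [VP] using h

def WinB (Ω : V → ℕ) : Bool → (ℕ → V) → Prop
  | false => Wins0 Ω
  | true => fun π => ¬ Wins0 Ω π

lemma winB_shift (Ω : V → ℕ) (b : Bool) (π : ℕ → V) (k : ℕ) :
    WinB Ω b (fun n => π (k + n)) ↔ WinB Ω b π := by
  cases b <;> simp [WinB, wins0_shift]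

def TotalOn (E : V → V → Prop) (U : Set V) : Prop :=
  ∀ v ∈ U, ∃ w, E v w ∧ w ∈ U

def Stra (E : V → V → Prop) (P : Set V) (b : Bool) (U : Set V) (σ : V → V) : Prop :=
  ∀ v, v ∈ VP P b → v ∈ U → E v (σ v) ∧ σ v ∈ U

def PlayIn (E : V → V → Prop) (P : Set V) (b : Bool) (U : Set V) (σ : V → V)
    (v : V) (π : ℕ → V) : Prop :=
  π 0 = v ∧ ∀ n, π n ∈ U ∧ E (π n) (π (n + 1)) ∧ (π n ∈ VP P b → π (n + 1) = σ (π n))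

variable {E : V → V → Prop} {P : Set V} {b : Bool} {U : Set V} {σ : V → V}

lemma exists_playIn (hU : TotalOn E U) (hσ : Stra E P b U σ) {v : V} (hv : v ∈ U) :
    ∃ π, PlayIn E P b U σ v π := by
  classical
  set f : {x : V // x ∈ U} → {x : V // x ∈ U} := fun x =>
    if h : (x : V) ∈ VP P b then ⟨σ x, (hσ x h x.2).2⟩
    else ⟨(hU x x.2).choose, (hU x x.2).choose_spec.2⟩ with hf
  refine ⟨fun n => (f^[n] ⟨v, hv⟩ : V), rfl, fun n => ?_⟩
  have hit : (f^[n + 1] ⟨v, hv⟩ : V) = (f (f^[n] ⟨v, hv⟩) : V) := by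
    rw [Function.iterate_succ_apply' f n _]
  set x := f^[n] ⟨v, hv⟩ with hx
  refine ⟨x.2, ?_, ?_⟩
  · show E (x : V) (f^[n + 1] ⟨v, hv⟩ : V)
    rw [hit]
    by_cases h : (x : V) ∈ VP P b
    · simp only [hf, dif_pos h]
      exact (hσ x h x.2).1
    · simp only [hf, dif_neg h]
      exact (hU x x.2).choose_spec.1
  · intro h
    show (f^[n + 1] ⟨v, hv⟩ : V) = σ (x : V)
    rw [hit]
    simp only [hf, dif_pos (show (x : V) ∈ VP P b from h)]

lemma playIn_shift {v : V} {π : ℕ → V} (h : PlayIn E P b U σ v π) (k : ℕ) :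
    PlayIn E P b U σ (π k) (fun n => π (k + n)) := by
  refine ⟨rfl, fun n => ?_⟩
  have := h.2 (k + n)
  refine ⟨this.1, ?_, ?_⟩
  · show E (π (k + n)) (π (k + (n + 1)))
    rw [show k + (n + 1) = (k + n) + 1 by omega]
    exact this.2.1
  · intro hv
    show π (k + (n + 1)) = σ (π (k + n))
    rw [show k + (n + 1) = (k + n) + 1 by omega]
    exact this.2.2 hv

lemma playIn_cons {v w : V} {π : ℕ → V} (hv : v ∈ U) (he : E v w)
    (hs : v ∈ VP P b → w = σ v) (h : PlayIn E P b U σ w π) :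
    PlayIn E P b U σ v (fun n => Nat.rec v (fun m _ => π m) n) := by
  refine ⟨rfl, fun n => ?_⟩
  cases n with
  | zero =>
    refine ⟨hv, ?_, ?_⟩
    · show E v (π 0); rw [h.1]; exact he
    · intro hb; show π 0 = σ v; rw [h.1, ← hs hb]
  | succ m => exact ⟨(h.2 m).1, (h.2 m).2.1, (h.2 m).2.2⟩

lemma step_closed (hU : TotalOn E U) (hσ : Stra E P b U σ) {W : Set V}
    (hW : ∀ v ∈ W, ∀ π, PlayIn E P b U σ v π → ∀ k, π k ∈ W) :
    ∀ v ∈ W, v ∈ U → ∀ w, E v w → w ∈ U → (v ∈ VP P b → w = σ v) → w ∈ W := by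
  intro v hvW hvU w he hwU hs
  obtain ⟨π, hπ⟩ := exists_playIn hU hσ hwU
  have := hW v hvW _ (playIn_cons hvU he hs hπ) 1
  simpa [hπ.1] using this

end PG

namespace PG
variable {V : Type*}

section Attractor

variable (E : V → V → Prop) (P : Set V) (i : Bool) (U T : Set V)

def attrStep (S : Set V) : Set V :=
  S ∪ {v | v ∈ U ∧ ((v ∈ VP P i ∧ ∃ w, E v w ∧ w ∈ S) ∨
    (v ∉ VP P i ∧ ∀ w, E v w → w ∈ U → w ∈ S))}

def attrL : ℕ → Set V
  | 0 => T
  | n + 1 => attrStep E P i U (attrL n)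

def Attr : Set V := ⋃ n, attrL E P i U T n

noncomputable def rank (v : V) : ℕ := sInf {n | v ∈ attrL E P i U T n}

open Classical in
noncomputable def attrStrat : V → V := fun v =>
  if h : ∃ w, E v w ∧ w ∈ Attr E P i U T ∧ rank E P i U T w < rank E P i U T v
  then h.choose else v

variable {E P i U T}

lemma attrL_mono : Monotone (attrL E P i U T) :=
  monotone_nat_of_le_succ fun n => Set.subset_union_left

lemma attrL_subset_U (hTU : T ⊆ U) : ∀ n, attrL E P i U T n ⊆ U
  | 0 => hTU
  | n + 1 => fun v hv => hv.elim (fun h => attrL_subset_U hTU n h) (fun h => h.1)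

lemma subset_attr : T ⊆ Attr E P i U T := fun v hv => Set.mem_iUnion.2 ⟨0, hv⟩

lemma attr_subset (hTU : T ⊆ U) : Attr E P i U T ⊆ U := fun v hv => by
  obtain ⟨n, hn⟩ := Set.mem_iUnion.1 hv
  exact attrL_subset_U hTU n hn

lemma mem_attr {v : V} : v ∈ Attr E P i U T ↔ ∃ n, v ∈ attrL E P i U T n :=
  Set.mem_iUnion

lemma mem_attrL_rank {v : V} (hv : v ∈ Attr E P i U T) :
    v ∈ attrL E P i U T (rank E P i U T v) :=
  Nat.sInf_mem (mem_attr.1 hv)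

lemma rank_le {v : V} {n : ℕ} (hv : v ∈ attrL E P i U T n) : rank E P i U T v ≤ n :=
  Nat.sInf_le hv

lemma attr_succ {v : V} (hv : v ∈ Attr E P i U T) (hvT : v ∉ T) :
    (v ∈ VP P i → ∃ w, E v w ∧ w ∈ Attr E P i U T ∧
      rank E P i U T w < rank E P i U T v) ∧
    (v ∉ VP P i → ∀ w, E v w → w ∈ U → w ∈ Attr E P i U T ∧
      rank E P i U T w < rank E P i U T v) := by
  have hm := mem_attrL_rank hv
  rcases hr : rank E P i U T v with _ | s
  · rw [hr] at hm; exact absurd hm hvT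
  · rw [hr] at hm
    have hlt : s < rank E P i U T v := by omega
    have hns : v ∉ attrL E P i U T s := Nat.notMem_of_lt_sInf hlt
    rcases hm with hm | ⟨hvU, hcase⟩
    · exact absurd hm hns
    constructor
    · intro hVP
      rcases hcase with ⟨_, w, he, hw⟩ | ⟨hn, _⟩
      · exact ⟨w, he, Set.mem_iUnion.2 ⟨s, hw⟩, by have := rank_le hw; omega⟩
      · exact absurd hVP hn
    · intro hnVP
      rcases hcase with ⟨hvp, _⟩ | ⟨_, hall⟩
      · exact absurd hvp hnVP
      · intro w he hwU
        have hw := hall w he hwU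
        exact ⟨Set.mem_iUnion.2 ⟨s, hw⟩, by have := rank_le hw; omega⟩

lemma attrStrat_spec {v : V} (hv : v ∈ Attr E P i U T) (hvT : v ∉ T)
    (hVP : v ∈ VP P i) :
    E v (attrStrat E P i U T v) ∧ attrStrat E P i U T v ∈ Attr E P i U T ∧
      rank E P i U T (attrStrat E P i U T v) < rank E P i U T v := by
  have h := (attr_succ hv hvT).1 hVP
  rw [attrStrat, dif_pos h]
  exact h.choose_spec

lemma attr_trap_own {v : V} (hvU : v ∈ U) (hvA : v ∉ Attr E P i U T)
    (hVP : v ∈ VP P i) : ∀ w, E v w → w ∉ Attr E P i U T := by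
  intro w he hw
  obtain ⟨n, hn⟩ := mem_attr.1 hw
  exact hvA (Set.mem_iUnion.2 ⟨n + 1, Or.inr ⟨hvU, Or.inl ⟨hVP, w, he, hn⟩⟩⟩)

lemma attr_trap_opp [Fintype V] {v : V} (hvU : v ∈ U) (hvA : v ∉ Attr E P i U T)
    (hnVP : v ∉ VP P i) : ∃ w, E v w ∧ w ∈ U ∧ w ∉ Attr E P i U T := by
  by_contra hcon
  push_neg at hcon
  set F : Set V := {w | E v w ∧ w ∈ U} with hF
  have hFfin : F.Finite := Set.toFinite F
  set N : ℕ := hFfin.toFinset.sup (rank E P i U T) with hN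
  refine hvA (Set.mem_iUnion.2 ⟨N + 1, Or.inr ⟨hvU, Or.inr ⟨hnVP, fun w he hwU => ?_⟩⟩⟩)
  have hwA : w ∈ Attr E P i U T := hcon w he hwU
  have : rank E P i U T w ≤ N :=
    Finset.le_sup (hFfin.mem_toFinset.2 ⟨he, hwU⟩)
  exact attrL_mono this (mem_attrL_rank hwA)

lemma attr_opp_step {v : V} (hv : v ∈ Attr E P i U T) (hvT : v ∉ T)
    (hnVP : v ∉ VP P i) : ∀ w, E v w → w ∈ U → w ∈ Attr E P i U T :=
  fun w he hwU => ((attr_succ hv hvT).2 hnVP w he hwU).1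

lemma totalOn_diff_attr [Fintype V] (hU : TotalOn E U) :
    TotalOn E (U \ Attr E P i U T) := by
  intro v ⟨hvU, hvA⟩
  by_cases hVP : v ∈ VP P i
  · obtain ⟨w, he, hwU⟩ := hU v hvU
    exact ⟨w, he, hwU, attr_trap_own hvU hvA hVP w he⟩
  · obtain ⟨w, he, hwU, hwA⟩ := attr_trap_opp hvU hvA hVP
    exact ⟨w, he, hwU, hwA⟩

lemma attr_reach {σ : V → V}
    (hagree : ∀ v, v ∈ Attr E P i U T → v ∉ T → v ∈ VP P i → σ v = attrStrat E P i U T v)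
    {v : V} {π : ℕ → V} (hπ : PlayIn E P i U σ v π) :
    ∀ k, π k ∈ Attr E P i U T → ∃ m, k ≤ m ∧ π m ∈ T := by
  have step : ∀ k, π k ∈ Attr E P i U T → π k ∉ T →
      π (k + 1) ∈ Attr E P i U T ∧ rank E P i U T (π (k + 1)) < rank E P i U T (π k) := by
    intro k hk hkT
    by_cases hVP : π k ∈ VP P i
    · have hσ : π (k + 1) = σ (π k) := (hπ.2 k).2.2 hVP
      rw [hσ, hagree _ hk hkT hVP]
      exact ⟨(attrStrat_spec hk hkT hVP).2.1, (attrStrat_spec hk hkT hVP).2.2⟩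
    · exact (attr_succ hk hkT).2 hVP _ (hπ.2 k).2.1 (hπ.2 (k + 1)).1
  have H : ∀ r k, π k ∈ Attr E P i U T → rank E P i U T (π k) ≤ r →
      ∃ m, k ≤ m ∧ π m ∈ T := by
    intro r
    induction r with
    | zero =>
      intro k hk hr
      by_cases hT : π k ∈ T
      · exact ⟨k, le_refl k, hT⟩
      · have := step k hk hT
        omega
    | succ r ih =>
      intro k hk hr
      by_cases hT : π k ∈ T
      · exact ⟨k, le_refl k, hT⟩
      · obtain ⟨hA, hlt⟩ := step k hk hT
        obtain ⟨m, hm, hT'⟩ := ih (k + 1) hA (by omega)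
        exact ⟨m, by omega, hT'⟩
  exact fun k hk => H (rank E P i U T (π k)) k hk le_rfl

end Attractor
end PG
namespace PG
variable {V : Type*} [Fintype V]

theorem zielonka (E : V → V → Prop) (P : Set V) (Ω : V → ℕ) :
    ∀ (n : ℕ) (U : Set V), U.ncard ≤ n → TotalOn E U →
    ∃ (W : Bool → Set V) (σ : Bool → V → V),
      (∀ b, W b ⊆ U) ∧ (W false ∪ W true = U) ∧
      (∀ b, Stra E P b U (σ b)) ∧
      (∀ b v, v ∈ W b → ∀ π, PlayIn E P b U (σ b) v π →
        (∀ k, π k ∈ W b) ∧ WinB Ω b π) := by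
  intro n
  induction n with
  | zero =>
    intro U hcard hU
    have hUe : U = ∅ := by
      rw [← Set.ncard_eq_zero (Set.toFinite U)]; omega
    refine ⟨fun _ => ∅, fun _ v => v, fun b => by simp, by simp [hUe],
      fun b v hVP hvU => by rw [hUe] at hvU; exact absurd hvU (Set.notMem_empty v),
      fun b v hv => absurd hv (Set.notMem_empty v)⟩
  | succ n ih =>
    intro U hcard hU
    classical
    by_cases hUe : U = ∅
    · refine ⟨fun _ => ∅, fun _ v => v, fun b => by simp, by simp [hUe],
        fun b v hVP hvU => by rw [hUe] at hvU; exact absurd hvU (Set.notMem_empty v),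
        fun b v hv => absurd hv (Set.notMem_empty v)⟩
    have hne : U.Nonempty := Set.nonempty_iff_ne_empty.2 hUe
    -- default strategy
    set dfl : V → V := fun v => if h : ∃ w, E v w ∧ w ∈ U then h.choose else v with hdfl
    have hdfl_spec : ∀ v ∈ U, E v (dfl v) ∧ dfl v ∈ U := by
      intro v hv
      have h : ∃ w, E v w ∧ w ∈ U := hU v hv
      simp only [hdfl]
      rw [dif_pos h]
      exact h.choose_spec
    -- maximal priority
    have hUfin : U.Finite := Set.toFinite U
    have hFs : hUfin.toFinset.Nonempty := by
      rwa [Set.Finite.toFinset_nonempty]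
    set p : ℕ := (hUfin.toFinset.image Ω).max' (hFs.image Ω) with hp
    have hple : ∀ u ∈ U, Ω u ≤ p := fun u hu =>
      Finset.le_max' _ _ (Finset.mem_image.2 ⟨u, hUfin.mem_toFinset.2 hu, rfl⟩)
    obtain ⟨u0, hu0U, hu0⟩ : ∃ u ∈ U, Ω u = p := by
      obtain ⟨u, hu, he⟩ := Finset.mem_image.1 ((hUfin.toFinset.image Ω).max'_mem (hFs.image Ω))
      exact ⟨u, hUfin.mem_toFinset.1 hu, he⟩
    obtain ⟨i, hwin_top⟩ : ∃ i : Bool, ∀ π : ℕ → V, (∀ k, Ω (π k) ≤ p) →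
        {k | Ω (π k) = p}.Infinite → WinB Ω i π := by
      by_cases hEp : Even p
      · exact ⟨false, fun π hb hi => by
          show Wins0 Ω π
          unfold Wins0
          rw [sSup_priorities Ω π p hb hi]
          exact hEp⟩
      · refine ⟨true, fun π hb hi hW => hEp ?_⟩
        have : Wins0 Ω π := hW
        unfold Wins0 at this
        rwa [sSup_priorities Ω π p hb hi] at this
    set j := !i with hj
    have hij : j ≠ i := by rw [hj]; cases i <;> simp
    have hVPj_of : ∀ v : V, v ∉ VP P i → v ∈ VP P j := fun v h => hj ▸ mem_VP_not h
    have hVPi_of : ∀ v : V, v ∉ VP P j → v ∈ VP P i := fun v h => by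
      have := mem_VP_not h
      rwa [hj, Bool.not_not] at this
    set N : Set V := {v | v ∈ U ∧ Ω v = p} with hN
    have hNU : N ⊆ U := fun v hv => hv.1
    set A : Set V := Attr E P i U N with hA
    have hNA : N ⊆ A := subset_attr
    have hAU : A ⊆ U := attr_subset hNU
    have hcard' : (U \ A).ncard ≤ n := by
      have hssub : U \ A ⊂ U := by
        refine ⟨Set.diff_subset, fun hsub => ?_⟩
        exact (hsub hu0U).2 (hNA ⟨hu0U, hu0⟩)
      have := Set.ncard_lt_ncard hssub hUfin
      omega
    obtain ⟨Y, τ, hYsub, hYcov, hYstra, hYwin⟩ :=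
      ih (U \ A) hcard' (totalOn_diff_attr hU)
    have hcov_bool : ∀ (Z : Bool → Set V) (S : Set V), Z false ∪ Z true = S →
        ∀ b : Bool, Z b ∪ Z (!b) = S := by
      intro Z S h b
      cases b
      · simpa using h
      · rw [Bool.not_true, Set.union_comm]; exact h
    have hYij : Y i ∪ Y j = U \ A := hj ▸ hcov_bool Y _ hYcov i
    have Ystep : ∀ b, ∀ v ∈ Y b, ∀ w, E v w → w ∈ U \ A →
        (v ∈ VP P b → w = τ b v) → w ∈ Y b := by
      intro b v hv w he hw hs
      exact step_closed (totalOn_diff_attr hU) (hYstra b)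
        (fun v hv π hπ k => (hYwin b v hv π hπ).1 k) v hv (hYsub b hv) w he hw hs
    by_cases hYj : Y j = ∅
    -- CASE 1 : the opponent's subgame region is empty; player i wins everywhere
    · have hYi : Y i = U \ A := by
        rw [← hYij, hYj, Set.union_empty]
      set σi : V → V := fun v =>
        if v ∈ U \ A then τ i v
        else if v ∈ A ∧ v ∉ N then attrStrat E P i U N v
        else dfl v with hσi
      have hσi_eval1 : ∀ v ∈ U \ A, σi v = τ i v := by
        intro v hv; simp only [hσi]; rw [if_pos hv]
      have hσi_eval2 : ∀ v, v ∈ A → v ∉ N → σi v = attrStrat E P i U N v := by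
        intro v hv hvN
        simp only [hσi]
        rw [if_neg (fun h => h.2 hv), if_pos ⟨hv, hvN⟩]
      set W : Bool → Set V := fun b => if b = i then U else ∅ with hW
      set σf : Bool → V → V := fun b => if b = i then σi else dfl with hσf
      have hWi : W i = U := by simp [hW]
      have hWo : ∀ b, b ≠ i → W b = ∅ := by
        intro b hb; simp [hW, hb]
      have hσfi : σf i = σi := by simp [hσf]
      have hσfo : ∀ b, b ≠ i → σf b = dfl := by
        intro b hb; simp [hσf, hb]
      refine ⟨W, σf, fun b => ?_, ?_, fun b => ?_, fun b v hvW π hπ => ?_⟩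
      · by_cases hb : b = i
        · rw [hb, hWi]
        · rw [hWo b hb]; exact Set.empty_subset U
      · rcases Bool.dichotomy i with hi | hi
        · rw [show (false : Bool) = i from hi.symm, hWi,
            hWo true (by rw [hi]; simp), Set.union_empty]
        · rw [show (true : Bool) = i from hi.symm, hWi,
            hWo false (by rw [hi]; simp), Set.union_comm, Set.union_empty]
      have hσi_eval3 : ∀ v, v ∈ A → v ∈ N → σi v = dfl v := by
        intro v h1 h2
        simp only [hσi]
        rw [if_neg (fun h => h.2 h1), if_neg (fun h => h.2 h2)]
      · by_cases hb : b = i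
        · rw [hb, hσfi]
          intro v hVP hvU
          by_cases hvA : v ∈ A
          · by_cases hvN : v ∈ N
            · rw [hσi_eval3 v hvA hvN]
              exact hdfl_spec v hvU
            · rw [hσi_eval2 v hvA hvN]
              obtain ⟨h1, h2, _⟩ := attrStrat_spec hvA hvN hVP
              exact ⟨h1, hAU h2⟩
          · rw [hσi_eval1 v ⟨hvU, hvA⟩]
            obtain ⟨h1, h2⟩ := hYstra i v hVP ⟨hvU, hvA⟩
            exact ⟨h1, h2.1⟩
        · rw [hσfo b hb]
          intro v hVP hvU
          exact hdfl_spec v hvU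
      · by_cases hb : b = i
        · rw [hb] at hvW hπ ⊢
          rw [hWi] at hvW
          rw [hσfi] at hπ
          refine ⟨fun k => by rw [hWi]; exact (hπ.2 k).1, ?_⟩
          by_cases hAvis : ∀ k, ∃ m, k ≤ m ∧ π m ∈ A
          · refine hwin_top π (fun k => hple _ (hπ.2 k).1) ?_
            refine infinite_of_unbounded _ (fun k => ?_)
            obtain ⟨m, hkm, hmA⟩ := hAvis k
            have hagree : ∀ v, v ∈ A → v ∉ N → v ∈ VP P i →
                σi v = attrStrat E P i U N v := fun v h1 h2 _ => hσi_eval2 v h1 h2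
            obtain ⟨m', hmm', hm'N⟩ := attr_reach hagree hπ m hmA
            exact ⟨m', by omega, hm'N.2⟩
          · push_neg at hAvis
            obtain ⟨k, hk⟩ := hAvis
            have htail : PlayIn E P i (U \ A) (τ i) (π k) (fun l => π (k + l)) := by
              refine ⟨rfl, fun l => ?_⟩
              have h1 : π (k + l) ∈ U \ A :=
                ⟨(hπ.2 (k + l)).1, hk (k + l) (by omega)⟩
              refine ⟨h1, ?_, fun hVP => ?_⟩
              · have := (playIn_shift hπ k).2 l
                exact this.2.1
              · have := ((playIn_shift hπ k).2 l).2.2 hVP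
                rw [this]
                exact hσi_eval1 _ h1
            have hmem : π k ∈ Y i := by
              rw [hYi]
              exact ⟨(hπ.2 k).1, hk k le_rfl⟩
            have := (hYwin i (π k) hmem _ htail).2
            exact (winB_shift Ω i π k).1 this
        · rw [hWo b hb] at hvW
          exact absurd hvW (Set.notMem_empty v)
    -- CASE 2 : the opponent wins somewhere in the subgame
    · have hYjne : (Y j).Nonempty := Set.nonempty_iff_ne_empty.2 hYj
      have hYjU : Y j ⊆ U := fun v hv => (hYsub j hv).1
      set B : Set V := Attr E P j U (Y j) with hB
      have hYjB : Y j ⊆ B := subset_attr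
      have hBU : B ⊆ U := attr_subset hYjU
      have hBusub : ∀ v, v ∈ B → v ∉ U \ B := fun v hv h => h.2 hv
      have hcard'' : (U \ B).ncard ≤ n := by
        obtain ⟨y0, hy0⟩ := hYjne
        have hssub : U \ B ⊂ U := by
          refine ⟨Set.diff_subset, fun hsub => ?_⟩
          exact (hsub (hYjU hy0)).2 (hYjB hy0)
        have := Set.ncard_lt_ncard hssub hUfin
        omega
      obtain ⟨Z, ρ, hZsub, hZcov, hZstra, hZwin⟩ :=
        ih (U \ B) hcard'' (totalOn_diff_attr hU)
      have hZij : Z i ∪ Z j = U \ B := hj ▸ hcov_bool Z _ hZcov i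
      have Zstep : ∀ b, ∀ v ∈ Z b, ∀ w, E v w → w ∈ U \ B →
          (v ∈ VP P b → w = ρ b v) → w ∈ Z b := by
        intro b v hv w he hw hs
        exact step_closed (totalOn_diff_attr hU) (hZstra b)
          (fun v hv π hπ k => (hZwin b v hv π hπ).1 k) v hv (hZsub b hv) w he hw hs
      set σi' : V → V := fun v => if v ∈ U \ B then ρ i v else dfl v with hσi'
      set σj' : V → V := fun v =>
        if v ∈ U \ B then ρ j v
        else if v ∈ Y j then τ j v
        else if v ∈ B then attrStrat E P j U (Y j) v
        else dfl v with hσj'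
      have hσi'_eval : ∀ v ∈ U \ B, σi' v = ρ i v := by
        intro v hv; simp only [hσi']; rw [if_pos hv]
      have hσj'_eval1 : ∀ v ∈ U \ B, σj' v = ρ j v := by
        intro v hv; simp only [hσj']; rw [if_pos hv]
      have hσj'_eval2 : ∀ v ∈ Y j, σj' v = τ j v := by
        intro v hv
        simp only [hσj']
        rw [if_neg (fun h => h.2 (hYjB hv)), if_pos hv]
      have hσj'_eval3 : ∀ v ∈ B, v ∉ Y j → σj' v = attrStrat E P j U (Y j) v := by
        intro v hv hvY
        simp only [hσj']
        rw [if_neg (fun h => h.2 hv), if_neg hvY, if_pos hv]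
      set W : Bool → Set V := fun b => if b = i then Z i else Z j ∪ B with hW
      set σf : Bool → V → V := fun b => if b = i then σi' else σj' with hσf
      have hWi : W i = Z i := by simp [hW]
      have hWo : ∀ b, b ≠ i → W b = Z j ∪ B := by
        intro b hb; simp [hW, hb]
      have hσfi : σf i = σi' := by simp [hσf]
      have hσfo : ∀ b, b ≠ i → σf b = σj' := by
        intro b hb; simp [hσf, hb]
      refine ⟨W, σf, fun b => ?_, ?_, fun b => ?_, fun b v hvW π hπ => ?_⟩
      · by_cases hb : b = i
        · rw [hb, hWi]; exact fun v hv => (hZsub i hv).1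
        · rw [hWo b hb]
          exact Set.union_subset (fun v hv => (hZsub j hv).1) hBU
      · have h1 : Z i ∪ (Z j ∪ B) = U := by
          rw [← Set.union_assoc, hZij, Set.diff_union_of_subset hBU]
        rcases Bool.dichotomy i with hi | hi
        · rw [show (false : Bool) = i from hi.symm, hWi, hWo true (by rw [hi]; simp)]
          exact h1
        · rw [show (true : Bool) = i from hi.symm, hWi, hWo false (by rw [hi]; simp),
            Set.union_comm]
          exact h1
      · by_cases hb : b = i
        · rw [hb, hσfi]
          intro v hVP hvU
          by_cases hvB : v ∈ U \ B
          · rw [hσi'_eval v hvB]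
            obtain ⟨h1, h2⟩ := hZstra i v hVP hvB
            exact ⟨h1, h2.1⟩
          · have : σi' v = dfl v := by simp only [hσi']; rw [if_neg hvB]
            rw [this]
            exact hdfl_spec v hvU
        · have hbj : b = j := hj ▸ Bool.eq_not_of_ne hb
          rw [hbj, hσfo j hij]
          intro v hVP hvU
          by_cases hvB : v ∈ U \ B
          · rw [hσj'_eval1 v hvB]
            obtain ⟨h1, h2⟩ := hZstra j v hVP hvB
            exact ⟨h1, h2.1⟩
          · have hvB' : v ∈ B := by
              by_contra h
              exact hvB ⟨hvU, h⟩
            by_cases hvY : v ∈ Y j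
            · rw [hσj'_eval2 v hvY]
              obtain ⟨h1, h2⟩ := hYstra j v hVP (hYsub j hvY)
              exact ⟨h1, h2.1⟩
            · rw [hσj'_eval3 v hvB' hvY]
              obtain ⟨h1, h2, _⟩ := attrStrat_spec hvB' hvY hVP
              exact ⟨h1, hBU h2⟩
      · by_cases hb : b = i
        · -- player i wins from Z i
          rw [hb] at hvW hπ ⊢
          rw [hWi] at hvW
          rw [hσfi] at hπ
          have hinv : ∀ k, π k ∈ Z i := by
            intro k
            induction k with
            | zero => rw [hπ.1]; exact hvW
            | succ k ihk =>
              have hkU'' : π k ∈ U \ B := hZsub i ihk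
              by_cases hVP : π k ∈ VP P i
              · have heq : π (k + 1) = σi' (π k) := (hπ.2 k).2.2 hVP
                have hmem : ρ i (π k) ∈ U \ B := (hZstra i (π k) hVP hkU'').2
                refine Zstep i (π k) ihk _ (hπ.2 k).2.1 ?_ (fun _ => ?_)
                · rw [heq, hσi'_eval _ hkU'']; exact hmem
                · rw [heq, hσi'_eval _ hkU'']
              · have hVPj : π k ∈ VP P j := hVPj_of _ hVP
                have hnB : π (k + 1) ∉ B :=
                  attr_trap_own hkU''.1 hkU''.2 hVPj _ (hπ.2 k).2.1
                exact Zstep i (π k) ihk _ (hπ.2 k).2.1 ⟨(hπ.2 (k + 1)).1, hnB⟩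
                  (fun h => absurd h hVP)
          have hplay : PlayIn E P i (U \ B) (ρ i) v π := by
            refine ⟨hπ.1, fun k => ⟨hZsub i (hinv k), (hπ.2 k).2.1, fun h => ?_⟩⟩
            rw [(hπ.2 k).2.2 h, hσi'_eval _ (hZsub i (hinv k))]
          exact ⟨fun k => by rw [hWi]; exact hinv k, (hZwin i v hvW π hplay).2⟩
        · -- player j wins from Z j ∪ B
          have hbj : b = j := hj ▸ Bool.eq_not_of_ne hb
          rw [hbj] at hvW hπ ⊢
          rw [hWo j hij] at hvW
          rw [hσfo j hij] at hπ
          have Ystay : ∀ k, π k ∈ Y j → π (k + 1) ∈ Y j := by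
            intro k hk
            have hkU' : π k ∈ U \ A := hYsub j hk
            by_cases hVP : π k ∈ VP P j
            · have heq : π (k + 1) = σj' (π k) := (hπ.2 k).2.2 hVP
              have hmem : τ j (π k) ∈ U \ A := (hYstra j (π k) hVP hkU').2
              refine Ystep j (π k) hk _ (hπ.2 k).2.1 ?_ (fun _ => ?_)
              · rw [heq, hσj'_eval2 _ hk]; exact hmem
              · rw [heq, hσj'_eval2 _ hk]
            · have hVPi : π k ∈ VP P i := hVPi_of _ hVP
              have hnA : π (k + 1) ∉ A :=
                attr_trap_own hkU'.1 hkU'.2 hVPi _ (hπ.2 k).2.1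
              exact Ystep j (π k) hk _ (hπ.2 k).2.1 ⟨(hπ.2 (k + 1)).1, hnA⟩
                (fun h => absurd h hVP)
          have Bstay : ∀ k, π k ∈ B → π (k + 1) ∈ B := by
            intro k hk
            by_cases hkY : π k ∈ Y j
            · exact hYjB (Ystay k hkY)
            · by_cases hVP : π k ∈ VP P j
              · have heq : π (k + 1) = σj' (π k) := (hπ.2 k).2.2 hVP
                rw [heq, hσj'_eval3 _ hk hkY]
                exact (attrStrat_spec hk hkY hVP).2.1
              · exact attr_opp_step hk hkY hVP _ (hπ.2 k).2.1 (hπ.2 (k + 1)).1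
          have hinv : ∀ k, π k ∈ Z j ∪ B := by
            intro k
            induction k with
            | zero => rw [hπ.1]; exact hvW
            | succ k ihk =>
              rcases ihk with ihk | ihk
              · have hkU'' : π k ∈ U \ B := hZsub j ihk
                by_cases hVP : π k ∈ VP P j
                · have heq : π (k + 1) = σj' (π k) := (hπ.2 k).2.2 hVP
                  have hmem : ρ j (π k) ∈ U \ B := (hZstra j (π k) hVP hkU'').2
                  refine Or.inl (Zstep j (π k) ihk _ (hπ.2 k).2.1 ?_ (fun _ => ?_))
                  · rw [heq, hσj'_eval1 _ hkU'']; exact hmem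
                  · rw [heq, hσj'_eval1 _ hkU'']
                · by_cases hk1B : π (k + 1) ∈ B
                  · exact Or.inr hk1B
                  · refine Or.inl (Zstep j (π k) ihk _ (hπ.2 k).2.1
                      ⟨(hπ.2 (k + 1)).1, hk1B⟩ (fun h => absurd h hVP))
              · exact Or.inr (Bstay k ihk)
          refine ⟨fun k => by rw [hWo j hij]; exact hinv k, ?_⟩
          by_cases hBvis : ∃ k, π k ∈ B
          · obtain ⟨k, hk⟩ := hBvis
            have hagree : ∀ v, v ∈ B → v ∉ Y j → v ∈ VP P j →
                σj' v = attrStrat E P j U (Y j) v :=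
              fun v h1 h2 _ => hσj'_eval3 v h1 h2
            obtain ⟨m, hkm, hmY⟩ := attr_reach hagree hπ k hk
            have hYall : ∀ l, π (m + l) ∈ Y j := by
              intro l
              induction l with
              | zero => simpa using hmY
              | succ l ihl =>
                rw [show m + (l + 1) = (m + l) + 1 by omega]
                exact Ystay _ ihl
            have htail : PlayIn E P j (U \ A) (τ j) (π m) (fun l => π (m + l)) := by
              refine ⟨by simp, fun l => ?_⟩
              refine ⟨hYsub j (hYall l), ?_, fun hVP => ?_⟩
              · exact ((playIn_shift hπ m).2 l).2.1
              · have := ((playIn_shift hπ m).2 l).2.2 hVP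
                rw [this]
                exact hσj'_eval2 _ (hYall l)
            have hm0 : π (m + 0) ∈ Y j := hYall 0
            have := (hYwin j (π (m + 0)) hm0 _ (by simpa using htail)).2
            have hW : WinB Ω j (fun l => π (m + l)) := by
              convert this using 2
            exact (winB_shift Ω j π m).1 hW
          · push_neg at hBvis
            have hZall : ∀ k, π k ∈ Z j := fun k =>
              (hinv k).elim id (fun h => absurd h (hBvis k))
            have hplay : PlayIn E P j (U \ B) (ρ j) v π := by
              refine ⟨hπ.1, fun k => ⟨hZsub j (hZall k), (hπ.2 k).2.1, fun h => ?_⟩⟩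
              rw [(hπ.2 k).2.2 h, hσj'_eval1 _ (hZsub j (hZall k))]
            have hv0 : v ∈ Z j := hπ.1 ▸ hZall 0
            exact (hZwin j v hv0 π hplay).2

end PG

/-- Positional determinacy of finite parity games: the winning regions of the
two players partition the set of positions. -/
theorem parity_game_determinacy (V : Type*) [Fintype V]
    (V₀ V₁ : Set V) (hcover : V₀ ∪ V₁ = Set.univ) (hdisj : Disjoint V₀ V₁)
    (E : V → V → Prop) (htotal : ∀ v, ∃ w, E v w) (Ω : V → ℕ) :
    ({v | ∃ σ, IsStrategy V₀ E σ ∧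
        ∀ π, ConsistentPlay V₀ E σ v π → Wins0 Ω π} ∪
     {v | ∃ σ, IsStrategy V₁ E σ ∧
        ∀ π, ConsistentPlay V₁ E σ v π → ¬ Wins0 Ω π} = Set.univ) ∧
    Disjoint
      {v | ∃ σ, IsStrategy V₀ E σ ∧
        ∀ π, ConsistentPlay V₀ E σ v π → Wins0 Ω π}
      {v | ∃ σ, IsStrategy V₁ E σ ∧
        ∀ π, ConsistentPlay V₁ E σ v π → ¬ Wins0 Ω π} := by
  classical
  have hV1 : V₁ = V₀ᶜ := by
    ext v
    constructor
    · intro h hv0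
      exact (Set.disjoint_left.1 hdisj) hv0 h
    · intro h
      have hv : v ∈ V₀ ∪ V₁ := by rw [hcover]; trivial
      rcases hv with h0 | h1
      · exact absurd h0 h
      · exact h1
  constructor
  · -- determinacy
    have htot : PG.TotalOn E Set.univ := fun v _ => by
      obtain ⟨w, hw⟩ := htotal v
      exact ⟨w, hw, trivial⟩
    obtain ⟨W, σ, hWsub, hWcov, hstra, hwin⟩ :=
      PG.zielonka E V₀ Ω (Fintype.card V) Set.univ
        (by rw [Set.ncard_univ, Nat.card_eq_fintype_card]) htot
    ext v
    simp only [Set.mem_union, Set.mem_univ, iff_true, Set.mem_setOf_eq]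
    have hv : v ∈ W false ∪ W true := by rw [hWcov]; trivial
    rcases hv with h | h
    · left
      refine ⟨σ false, fun u hu => (hstra false u hu trivial).1, fun π hπ => ?_⟩
      have hp : PG.PlayIn E V₀ false Set.univ (σ false) v π :=
        ⟨hπ.1, fun n => ⟨trivial, (hπ.2 n).1, (hπ.2 n).2⟩⟩
      exact (hwin false v h π hp).2
    · right
      rw [hV1]
      refine ⟨σ true, fun u hu => (hstra true u hu trivial).1, fun π hπ => ?_⟩
      have hp : PG.PlayIn E V₀ true Set.univ (σ true) v π :=
        ⟨hπ.1, fun n => ⟨trivial, (hπ.2 n).1, (hπ.2 n).2⟩⟩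
      exact (hwin true v h π hp).2
  · -- disjointness
    rw [Set.disjoint_left]
    rintro v ⟨σ0, hσ0, h0⟩ ⟨σ1, hσ1, h1⟩
    set f : V → V := fun u => if u ∈ V₀ then σ0 u else σ1 u with hf
    set π : ℕ → V := fun n => f^[n] v with hπdef
    have hstep : ∀ n, π (n + 1) = f (π n) := fun n => by
      simp only [hπdef]
      rw [Function.iterate_succ_apply' f n v]
    have hmem : ∀ u, u ∉ V₀ → u ∈ V₁ := by
      intro u hu
      have : u ∈ V₀ ∪ V₁ := by rw [hcover]; trivial
      rcases this with h | h
      · exact absurd h hu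
      · exact h
    have hedge : ∀ n, E (π n) (π (n + 1)) := by
      intro n
      rw [hstep n]
      by_cases h : π n ∈ V₀
      · have : f (π n) = σ0 (π n) := by simp only [hf]; rw [if_pos h]
        rw [this]; exact hσ0 _ h
      · have : f (π n) = σ1 (π n) := by simp only [hf]; rw [if_neg h]
        rw [this]; exact hσ1 _ (hmem _ h)
    have hc0 : ConsistentPlay V₀ E σ0 v π := by
      refine ⟨rfl, fun n => ⟨hedge n, fun h => ?_⟩⟩
      rw [hstep n]
      simp only [hf]; rw [if_pos h]
    have hc1 : ConsistentPlay V₁ E σ1 v π := by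
      refine ⟨rfl, fun n => ⟨hedge n, fun h => ?_⟩⟩
      have hn0 : π n ∉ V₀ := fun h0 => (Set.disjoint_left.1 hdisj) h0 h
      rw [hstep n]
      simp only [hf]; rw [if_neg hn0]
    exact h1 π hc1 (h0 π hc0)
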